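/- arXiv:1903.09416 — 2 statements merged into one kernel-verified Lean document; each statement's English description precedes it below -/
import Mathlib

section
/- Suppose for each box B a set F̃p(B) ⊆ ℝ³ satisfies F̃p(B/σ) ⊆ Fp(B) ⊆ F̃p(B) for some fixed σ > 1, where Fp is monotone (B' ⊆ B implies Fp(B') ⊆ Fp(B)). Define φ̃'(B) recursively on the subdivision tree: at the root, φ̃'(B) = {f ∈ Φ : f ∩ F̃p(B) ≠ ∅}; otherwise φ̃'(B) = {f ∈ φ̃'(parent(B)) : f ∩ F̃p(B) ≠ ∅}, and analogously for shrunk boxes B/σ using parent(B)/σ. Then for every box B in the tree: φ̃'(B/σ) ⊆ φ(B) ⊆ φ̃'(B), where φ(B) = {f ∈ Φ : f ∩ Fp(B) ≠ ∅}. -/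
/-- Boxes form a rooted subdivision tree (indexed by `ι`, with `parent`, `root`, and a
`depth` function decreasing towards the root); `box B` is the set of configurations of
box B and `sh B` is the set of configurations of the shrunk box B/σ.  `Fp` is the
monotone exact-footprint map, `Ft B` and `Fts B` are the approximate footprints
F̃p(B) and F̃p(B/σ), satisfying F̃p(B/σ) ⊆ Fp(B) ⊆ F̃p(B).  The recursive feature sets
φ̃'(B) and φ̃'(B/σ) are defined from the feature set Φ as in the paper.  Then for every
box B: φ̃'(B/σ) ⊆ φ(B) ⊆ φ̃'(B), where φ(B) = {f ∈ Φ : f ∩ Fp(B) ≠ ∅}. -/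
theorem stmt7 {X Y ι : Type*} (box sh : ι → Set X) (root : ι) (parent : ι → ι)
    (depth : ι → ℕ)
    (hdepth : ∀ B, B ≠ root → depth (parent B) < depth B)
    (hchild : ∀ B, B ≠ root → box B ⊆ box (parent B))
    (hshParent : ∀ B, B ≠ root → sh B ⊆ sh (parent B))
    (hshSub : ∀ B, sh B ⊆ box B)
    (Fp : Set X → Set Y) (hmono : ∀ {A B : Set X}, A ⊆ B → Fp A ⊆ Fp B)
    (Φ : Set (Set Y)) (Ft Fts : ι → Set Y)
    (h1 : ∀ B, Fts B ⊆ Fp (box B)) (h2 : ∀ B, Fp (box B) ⊆ Ft B)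
    (φ' φ's : ι → Set (Set Y))
    (hroot : φ' root = {f ∈ Φ | (f ∩ Ft root).Nonempty})
    (hrec : ∀ B, B ≠ root → φ' B = {f ∈ φ' (parent B) | (f ∩ Ft B).Nonempty})
    (hroots : φ's root = {f ∈ Φ | (f ∩ Fts root).Nonempty})
    (hrecs : ∀ B, B ≠ root → φ's B = {f ∈ φ's (parent B) | (f ∩ Fts B).Nonempty}) :
    ∀ B, φ's B ⊆ {f ∈ Φ | (f ∩ Fp (box B)).Nonempty} ∧
      {f ∈ Φ | (f ∩ Fp (box B)).Nonempty} ⊆ φ' B := by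
  have key : ∀ n B, depth B ≤ n →
      φ's B ⊆ {f ∈ Φ | (f ∩ Fp (box B)).Nonempty} ∧
      {f ∈ Φ | (f ∩ Fp (box B)).Nonempty} ⊆ φ' B := by
    intro n
    induction n with
    | zero =>
      intro B hB
      by_cases h : B = root
      · subst h
        constructor
        · intro f hf
          rw [hroots] at hf
          exact ⟨hf.1, hf.2.mono (Set.inter_subset_inter_right _ (h1 _))⟩
        · intro f hf
          rw [hroot]
          exact ⟨hf.1, hf.2.mono (Set.inter_subset_inter_right _ (h2 _))⟩
      · exact absurd (Nat.lt_of_lt_of_le (hdepth B h) hB) (Nat.not_lt_zero _)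
    | succ n ih =>
      intro B hB
      by_cases h : B = root
      · subst h
        constructor
        · intro f hf
          rw [hroots] at hf
          exact ⟨hf.1, hf.2.mono (Set.inter_subset_inter_right _ (h1 _))⟩
        · intro f hf
          rw [hroot]
          exact ⟨hf.1, hf.2.mono (Set.inter_subset_inter_right _ (h2 _))⟩
      · have hp := ih (parent B) (Nat.lt_succ_iff.mp (Nat.lt_of_lt_of_le (hdepth B h) hB))
        constructor
        · intro f hf
          rw [hrecs B h] at hf
          have hΦ : f ∈ Φ := (hp.1 hf.1).1
          exact ⟨hΦ, hf.2.mono (Set.inter_subset_inter_right _ (h1 B))⟩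
        · intro f hf
          rw [hrec B h]
          refine ⟨hp.2 ⟨hf.1, hf.2.mono (Set.inter_subset_inter_right _ (hmono (hchild B h)))⟩,
            hf.2.mono (Set.inter_subset_inter_right _ (h2 B))⟩
  exact fun B => key (depth B) B le_rfl
end

section
/- Let C = {x ∈ P_C : ‖x−O‖ = r} be a circle in a plane P_C ⊂ ℝ³ and let p ∈ ℝ³ be a point. Let p' be the orthogonal projection of p onto P_C. If p' ≠ O, then the distance from p to C equals sqrt( (‖p'−O‖ − r)² + ‖p − p'‖² ) when ‖p'−O‖ ≥ 0; that is, Sep(C, {p})² = (‖p'−O‖ − r)² + dist(p, P_C)². -/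
noncomputable section

open scoped RealInnerProductSpace

/-- ℝ³ with the Euclidean norm. -/
abbrev V : Type := EuclideanSpace ℝ (Fin 3)

/-- Sep(A,B) = inf{‖a−b‖ : a ∈ A, b ∈ B}. -/
noncomputable def sep (A B : Set V) : ℝ :=
  sInf {d | ∃ a ∈ A, ∃ b ∈ B, d = dist a b}

/-- Let C = {x ∈ P_C : ‖x−O‖ = r} be the circle of radius r centered at O in the
plane P_C through O with unit normal n, let p ∈ ℝ³ and let p' = p − ⟨p−O,n⟩n be the
orthogonal projection of p onto P_C.  If p' ≠ O, then
Sep(C, {p})² = (‖p'−O‖ − r)² + ‖p − p'‖², where ‖p − p'‖ = dist(p, P_C). -/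
theorem stmt11 (O n p : V) (hn : ‖n‖ = 1) (r : ℝ) (hr : 0 ≤ r)
    (hp' : p - ⟪p - O, n⟫ • n ≠ O) :
    sep {x : V | ⟪x - O, n⟫ = 0 ∧ ‖x - O‖ = r} {p} ^ 2 =
      (‖(p - ⟪p - O, n⟫ • n) - O‖ - r) ^ 2 + ‖p - (p - ⟪p - O, n⟫ • n)‖ ^ 2 := by
  set t : ℝ := ⟪p - O, n⟫ with ht
  set p' : V := p - t • n with hp'def
  set d : ℝ := ‖p' - O‖ with hd
  have hd0 : 0 < d := by
    rw [hd, norm_pos_iff]; exact sub_ne_zero.mpr hp'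
  have hnn : ⟪n, n⟫ = (1:ℝ) := by
    rw [real_inner_self_eq_norm_sq, hn]; norm_num
  have hsub : p' - O = (p - O) - t • n := by rw [hp'def]; abel
  have horth : ⟪p' - O, n⟫ = 0 := by
    rw [hsub, inner_sub_left, real_inner_smul_left, hnn, ← ht]; ring
  have hppt : p - p' = t • n := by rw [hp'def]; abel
  have htn : ‖p - p'‖ ^ 2 = t ^ 2 := by
    rw [hppt, norm_smul, hn, Real.norm_eq_abs, mul_one, sq_abs]
  have key : ∀ x : V, ⟪x - O, n⟫ = 0 → ‖x - p‖ ^ 2 = ‖x - p'‖ ^ 2 + t ^ 2 := by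
    intro x hx
    have h1 : x - p = (x - p') - t • n := by rw [hp'def]; abel
    have h2 : ⟪x - p', t • n⟫ = 0 := by
      have h : x - p' = (x - O) - (p' - O) := by abel
      rw [real_inner_smul_right, h, inner_sub_left, hx, horth]; ring
    have h3 : ‖t • n‖ ^ 2 = t ^ 2 := by
      rw [norm_smul, hn, Real.norm_eq_abs, mul_one, sq_abs]
    rw [h1, norm_sub_sq_real, h2, h3]; ring
  set m : ℝ := Real.sqrt ((d - r) ^ 2 + t ^ 2) with hm
  have hmnn : (0:ℝ) ≤ (d - r) ^ 2 + t ^ 2 := by positivity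
  set q : V := O + (r / d) • (p' - O) with hq
  have hqO : q - O = (r / d) • (p' - O) := by rw [hq]; abel
  have hq1 : ⟪q - O, n⟫ = 0 := by rw [hqO, real_inner_smul_left, horth]; ring
  have hq2 : ‖q - O‖ = r := by
    rw [hqO, norm_smul, ← hd, Real.norm_eq_abs, abs_div, abs_of_nonneg hr,
      abs_of_pos hd0]
    field_simp
  have hqp' : ‖q - p'‖ = |d - r| := by
    have h1 : q - p' = (r / d - 1) • (p' - O) := by
      rw [hq, sub_smul, one_smul]; abel
    rw [h1, norm_smul, ← hd, Real.norm_eq_abs,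
      show r / d - 1 = (r - d) / d by field_simp,
      abs_div, abs_of_pos hd0, div_mul_cancel₀ _ hd0.ne', abs_sub_comm]
  have hqdist : ‖q - p‖ ^ 2 = (d - r) ^ 2 + t ^ 2 := by
    rw [key q hq1, hqp', sq_abs]
  have hqm : ‖q - p‖ = m := by
    rw [hm, ← hqdist, Real.sqrt_sq (norm_nonneg _)]
  have hlow : ∀ x : V, ⟪x - O, n⟫ = 0 → ‖x - O‖ = r → m ≤ ‖x - p‖ := by
    intro x hx1 hx2
    have h1 : |d - r| ≤ ‖x - p'‖ := by
      calc |d - r| = |‖p' - O‖ - ‖x - O‖| := by rw [← hd, hx2]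
        _ ≤ ‖(p' - O) - (x - O)‖ := abs_norm_sub_norm_le _ _
        _ = ‖x - p'‖ := by rw [norm_sub_rev]; congr 1; abel
    have h2 : (d - r) ^ 2 ≤ ‖x - p'‖ ^ 2 := by
      calc (d - r) ^ 2 = |d - r| ^ 2 := (sq_abs _).symm
        _ ≤ ‖x - p'‖ ^ 2 := by
            exact pow_le_pow_left₀ (abs_nonneg _) h1 2
    have h3 : (d - r) ^ 2 + t ^ 2 ≤ ‖x - p‖ ^ 2 := by
      rw [key x hx1]; linarith
    calc m ≤ Real.sqrt (‖x - p‖ ^ 2) := Real.sqrt_le_sqrt h3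
      _ = ‖x - p‖ := Real.sqrt_sq (norm_nonneg _)
  have hqC : q ∈ {x : V | ⟪x - O, n⟫ = 0 ∧ ‖x - O‖ = r} := ⟨hq1, hq2⟩
  have hsep : sep {x : V | ⟪x - O, n⟫ = 0 ∧ ‖x - O‖ = r} {p} = m := by
    unfold sep
    apply le_antisymm
    · apply csInf_le
      · refine ⟨0, ?_⟩
        rintro e ⟨a, ha, b, hb, rfl⟩
        exact dist_nonneg
      · exact ⟨q, hqC, p, rfl, by rw [dist_eq_norm, hqm]⟩
    · refine le_csInf ⟨dist q p, q, hqC, p, rfl, rfl⟩ ?_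
      rintro e ⟨a, ⟨ha1, ha2⟩, b, hb, rfl⟩
      rw [Set.mem_singleton_iff] at hb
      subst hb
      rw [dist_eq_norm]
      exact hlow a ha1 ha2
  rw [hsep, htn, hm, Real.sq_sqrt hmnn]
end
end
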